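/- arXiv:1208.2888 — 2 statements merged into one kernel-verified Lean document; each statement's English description precedes it below -/
import Mathlib

section
/- Assume in addition that inf_Θ g > 0 (so that log g is bounded). Let μ be an ergodic T-invariant probability measure on (Θ, 𝓑). Then μ(S_t) = 1 if t = γ(μ), and μ(S_t) = 0 for every t ≠ γ(μ). -/
open MeasureTheory Filter Topology

/-- The general setting of the paper: a measurable base system with invertible
driving map `T`, a concave fibre function `h` (with its derivative `h'` on `[0,∞)`)
and a bounded measurable positive function `g`. -/
structure Setting (Θ : Type*) [MeasurableSpace Θ] where
  T : Θ → Θ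
  Tinv : Θ → Θ
  left_inv : Function.LeftInverse Tinv T
  right_inv : Function.RightInverse Tinv T
  T_meas : Measurable T
  Tinv_meas : Measurable Tinv
  h : ℝ → ℝ
  h' : ℝ → ℝ
  h_hasDeriv : ∀ x ∈ Set.Ici (0 : ℝ), HasDerivWithinAt h (h' x) (Set.Ici 0) x
  h'_cont : ContinuousOn h' (Set.Ici 0)
  h_strictConcave : StrictConcaveOn ℝ (Set.Ici 0) h
  h_zero : h 0 = 0
  h'_pos : ∀ x : ℝ, 0 < x → 0 < h' x
  h'_zero : h' 0 = 1
  h_sublinear : Tendsto (fun x => h x / x) atTop (𝓝 0)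
  g : Θ → ℝ
  g_pos : ∀ θ, 0 < g θ
  g_bdd : ∃ C : ℝ, ∀ θ, g θ ≤ C
  g_meas : Measurable g

namespace Setting

variable {Θ : Type*} [MeasurableSpace Θ]

/-- The fibre maps `f_t(θ,x) = e^{-t} g(θ) h(x)`. -/
noncomputable def f (S : Setting Θ) (t : ℝ) (θ : Θ) (x : ℝ) : ℝ :=
  Real.exp (-t) * S.g θ * S.h x

/-- The iterated fibre maps: `fn t 0 θ x = x` and
`fn t (n+1) θ x = f t (T^[n] θ) (fn t n θ x)`, so that `fn t 1 = f t`. -/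
noncomputable def fn (S : Setting Θ) (t : ℝ) : ℕ → Θ → ℝ → ℝ
  | 0, _, x => x
  | n + 1, θ, x => S.f t (S.T^[n] θ) (S.fn t n θ x)

/-- `ψ_{t,n}(θ) = f_t^n(T^{-n}θ, M)`. -/
noncomputable def ψ (S : Setting Θ) (t M : ℝ) (n : ℕ) (θ : Θ) : ℝ :=
  S.fn t n (S.Tinv^[n] θ) M

/-- The maximal invariant function `φ_t(θ) = inf_{n ≥ 1} ψ_{t,n}(θ)`. -/
noncomputable def φ (S : Setting Θ) (t M : ℝ) (θ : Θ) : ℝ :=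
  ⨅ n : ℕ, S.ψ t M (n + 1) θ

/-- The zero set `N_t = {θ : φ_t(θ) = 0}`. -/
noncomputable def Nset (S : Setting Θ) (t M : ℝ) : Set Θ := {θ | S.φ t M θ = 0}

/-- The critical parameter `t_c(θ) = inf {t : φ_t(θ) = 0}`. -/
noncomputable def tc (S : Setting Θ) (M : ℝ → ℝ) (θ : Θ) : ℝ :=
  sInf {t : ℝ | S.φ t (M t) θ = 0}

/-- The bifurcation set `S_t = {θ : t_c(θ) = t}`. -/
noncomputable def Sset (S : Setting Θ) (M : ℝ → ℝ) (t : ℝ) : Set Θ :=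
  {θ | S.tc M θ = t}

/-- The Birkhoff average `Γ^{(n)}(θ) = (1/n) ∑_{k=1}^n log g(T^{-k}θ)`. -/
noncomputable def Γn (S : Setting Θ) (n : ℕ) (θ : Θ) : ℝ :=
  (∑ k ∈ Finset.range n, Real.log (S.g (S.Tinv^[k + 1] θ))) / n

/-- The lower backwards Lyapunov average `Γ(θ) = liminf_n Γ^{(n)}(θ)`. -/
noncomputable def Γ (S : Setting Θ) (θ : Θ) : ℝ :=
  Filter.liminf (fun n : ℕ => S.Γn n θ) Filter.atTop

/-- The averaged exponent `γ(μ) = ∫ log g dμ`. -/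
noncomputable def γfn (S : Setting Θ) (μ : Measure Θ) : ℝ :=
  ∫ θ, Real.log (S.g θ) ∂μ

/-- The function `H(x) = log (h(x)/x)`. -/
noncomputable def Hfn (S : Setting Θ) (x : ℝ) : ℝ := Real.log (S.h x / x)

end Setting

section Helpers
variable {u v : ℕ → ℝ} {K : ℝ}

lemma bddU_of_abs (hu : ∀ n, |u n| ≤ K) : IsBoundedUnder (· ≤ ·) atTop u :=
  isBoundedUnder_of ⟨K, fun n => (abs_le.1 (hu n)).2⟩

lemma bddL_of_abs (hu : ∀ n, |u n| ≤ K) : IsBoundedUnder (· ≥ ·) atTop u :=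
  isBoundedUnder_of ⟨-K, fun n => (abs_le.1 (hu n)).1⟩

lemma limsup_le_limsup_of_tendsto_sub (hu : ∀ n, |u n| ≤ K) (hv : ∀ n, |v n| ≤ K)
    (h : Tendsto (fun n => u n - v n) atTop (𝓝 0)) :
    limsup u atTop ≤ limsup v atTop := by
  refine le_of_forall_pos_le_add fun ε hε => ?_
  have hev : ∀ᶠ n in atTop, u n ≤ v n + ε := by
    filter_upwards [h.eventually (eventually_le_nhds hε)] with n hn
    nlinarith [hn]
  calc limsup u atTop ≤ limsup (fun n => v n + ε) atTop :=
        limsup_le_limsup hev ((bddL_of_abs hu).isCoboundedUnder_le)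
          (isBoundedUnder_of ⟨K + ε, fun n => by
            have := (abs_le.1 (hv n)).2; linarith⟩)
    _ = limsup v atTop + ε :=
        limsup_add_const atTop v ε (bddU_of_abs hv) ((bddL_of_abs hv).isCoboundedUnder_le)

lemma limsup_eq_limsup_of_tendsto_sub (hu : ∀ n, |u n| ≤ K) (hv : ∀ n, |v n| ≤ K)
    (h : Tendsto (fun n => u n - v n) atTop (𝓝 0)) :
    limsup u atTop = limsup v atTop :=
  le_antisymm (limsup_le_limsup_of_tendsto_sub hu hv h)
    (limsup_le_limsup_of_tendsto_sub hv hu (by simpa using h.neg))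

lemma liminf_le_liminf_of_tendsto_sub (hu : ∀ n, |u n| ≤ K) (hv : ∀ n, |v n| ≤ K)
    (h : Tendsto (fun n => u n - v n) atTop (𝓝 0)) :
    liminf u atTop ≤ liminf v atTop := by
  refine le_of_forall_pos_le_add fun ε hε => ?_
  have hev : ∀ᶠ n in atTop, u n ≤ v n + ε := by
    filter_upwards [h.eventually (eventually_le_nhds hε)] with n hn
    nlinarith [hn]
  calc liminf u atTop ≤ liminf (fun n => v n + ε) atTop :=
        liminf_le_liminf hev (bddL_of_abs hu)
          ((isBoundedUnder_of ⟨K + ε, fun n => by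
            have := (abs_le.1 (hv n)).2; linarith⟩).isCoboundedUnder_ge)
    _ = liminf v atTop + ε :=
        liminf_add_const atTop v ε ((bddU_of_abs hv).isCoboundedUnder_ge) (bddL_of_abs hv)

lemma liminf_eq_liminf_of_tendsto_sub (hu : ∀ n, |u n| ≤ K) (hv : ∀ n, |v n| ≤ K)
    (h : Tendsto (fun n => u n - v n) atTop (𝓝 0)) :
    liminf u atTop = liminf v atTop :=
  le_antisymm (liminf_le_liminf_of_tendsto_sub hu hv h)
    (liminf_le_liminf_of_tendsto_sub hv hu (by simpa using h.neg))

end Helpers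

namespace ErgAux

variable {Θ : Type*} [MeasurableSpace Θ]

noncomputable def Sn (σ : Θ → Θ) (F : Θ → ℝ) (n : ℕ) (θ : Θ) : ℝ :=
  ∑ k ∈ Finset.range n, F (σ^[k] θ)

noncomputable def Mx (σ : Θ → Θ) (F : Θ → ℝ) : ℕ → Θ → ℝ
  | 0, _ => 0
  | n+1, θ => max (Mx σ F n θ) (Sn σ F (n+1) θ)

variable {σ : Θ → Θ} {F : Θ → ℝ} {K : ℝ}

lemma Sn_succ (n : ℕ) (θ : Θ) : Sn σ F (n+1) θ = F θ + Sn σ F n (σ θ) := by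
  unfold Sn
  rw [Finset.sum_range_succ']
  simp [Function.iterate_succ_apply, add_comm]

lemma Sn_succ_right (n : ℕ) (θ : Θ) : Sn σ F (n+1) θ = Sn σ F n θ + F (σ^[n] θ) := by
  unfold Sn; rw [Finset.sum_range_succ]

lemma Sn_abs (hK : ∀ θ, |F θ| ≤ K) (n : ℕ) (θ : Θ) : |Sn σ F n θ| ≤ n * K := by
  refine (Finset.abs_sum_le_sum_abs _ _).trans ?_
  calc ∑ k ∈ Finset.range n, |F (σ^[k] θ)| ≤ ∑ _k ∈ Finset.range n, K :=
        Finset.sum_le_sum fun k _ => hK _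
    _ = n * K := by simp [mul_comm]

lemma avg_abs (hK : ∀ θ, |F θ| ≤ K) (n : ℕ) (θ : Θ) : |Sn σ F n θ / n| ≤ max K 0 := by
  rcases Nat.eq_zero_or_pos n with rfl | hn
  · simp
  · have hn' : (0:ℝ) < n := by exact_mod_cast hn
    rw [abs_div, abs_of_pos hn', div_le_iff₀ hn']
    calc |Sn σ F n θ| ≤ n * K := Sn_abs hK n θ
      _ ≤ max K 0 * n := by
          rw [mul_comm]; gcongr; exact le_max_left _ _
  
lemma Mx_nonneg (n : ℕ) (θ : Θ) : 0 ≤ Mx σ F n θ := by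
  induction n with
  | zero => simp [Mx]
  | succ n ih => exact ih.trans (le_max_left _ _)

lemma Mx_mono (n : ℕ) (θ : Θ) : Mx σ F n θ ≤ Mx σ F (n+1) θ := le_max_left _ _

lemma Sn_le_Mx (n : ℕ) (θ : Θ) : Sn σ F (n+1) θ ≤ Mx σ F (n+1) θ := le_max_right _ _

lemma Mx_succ_le (n : ℕ) (θ : Θ) : Mx σ F (n+1) θ ≤ max 0 (F θ + Mx σ F n (σ θ)) := by
  induction n with
  | zero =>
    have : Sn σ F 1 θ = F θ := by simp [Sn]
    simp [Mx, this]
  | succ n ih =>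
    have h1 : Mx σ F (n+1) θ ≤ max 0 (F θ + Mx σ F (n+1) (σ θ)) :=
      ih.trans (by gcongr; exact Mx_mono n (σ θ))
    have h2 : Sn σ F (n+2) θ ≤ F θ + Mx σ F (n+1) (σ θ) := by
      rw [Sn_succ (n+1) θ]
      exact add_le_add le_rfl (Sn_le_Mx n (σ θ))
    exact max_le h1 (h2.trans (le_max_right _ _))

lemma Mx_le (hK : ∀ θ, |F θ| ≤ K) (n : ℕ) (θ : Θ) : Mx σ F n θ ≤ n * K := by
  have hK0 : 0 ≤ K := (abs_nonneg _).trans (hK θ)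
  induction n with
  | zero => simp [Mx]
  | succ n ih =>
    refine max_le (ih.trans ?_) ((le_abs_self _).trans ((Sn_abs hK (n+1) θ).trans le_rfl))
    have : (n:ℝ) ≤ (n+1:ℕ) := by exact_mod_cast Nat.le_succ n
    nlinarith

lemma Sn_meas (hσ : Measurable σ) (hF : Measurable F) (n : ℕ) : Measurable (Sn σ F n) := by
  unfold Sn
  exact Finset.measurable_sum _ fun k _ => hF.comp (hσ.iterate k)

lemma Mx_meas (hσ : Measurable σ) (hF : Measurable F) (n : ℕ) : Measurable (Mx σ F n) := by
  induction n with
  | zero => simpa [Mx] using measurable_const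
  | succ n ih => exact ih.max (Sn_meas hσ hF (n+1))

variable {μ : Measure Θ} [IsProbabilityMeasure μ]

lemma int_of_bdd {G : Θ → ℝ} (hG : Measurable G) {C : ℝ} (hC : ∀ θ, |G θ| ≤ C) :
    Integrable G μ :=
  (integrable_const C).mono' hG.aestronglyMeasurable
    (ae_of_all _ fun θ => by simpa [Real.norm_eq_abs] using hC θ)

lemma maximal (hσm : Measurable σ) (hσ : MeasurePreserving σ μ μ)
    (hF : Measurable F) (hK : ∀ θ, |F θ| ≤ K) :
    0 ≤ ∫ θ in ⋃ n, {θ | 0 < Mx σ F n θ}, F θ ∂μ := by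
  have intF : Integrable F μ := int_of_bdd hF hK
  have hMxabs : ∀ n θ, |Mx σ F n θ| ≤ n * K := fun n θ => by
    rw [abs_of_nonneg (Mx_nonneg n θ)]; exact Mx_le hK n θ
  have intMx : ∀ n, Integrable (Mx σ F n) μ := fun n =>
    int_of_bdd (Mx_meas hσm hF n) (hMxabs n)
  have intMxσ : ∀ n, Integrable (fun θ => Mx σ F n (σ θ)) μ := fun n =>
    int_of_bdd ((Mx_meas hσm hF n).comp hσm) (fun θ => hMxabs n (σ θ))
  have hA : ∀ n, MeasurableSet {θ | 0 < Mx σ F n θ} := fun n =>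
    measurableSet_lt measurable_const (Mx_meas hσm hF n)
  have hMxle : ∀ m n, m ≤ n → ∀ θ, Mx σ F m θ ≤ Mx σ F n θ := by
    intro m n hmn
    induction n, hmn using Nat.le_induction with
    | base => exact fun θ => le_rfl
    | succ n hmn ih => exact fun θ => (ih θ).trans (Mx_mono n θ)
  have hmono : Monotone (fun n => {θ | 0 < Mx σ F n θ}) := by
    intro m n hmn θ hθ
    exact lt_of_lt_of_le hθ (hMxle m n hmn θ)
  have step : ∀ n, 0 ≤ ∫ θ in {θ | 0 < Mx σ F n θ}, F θ ∂μ := by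
    intro n
    rcases n with _ | n
    · simp [Mx]
    · set A := {θ | 0 < Mx σ F (n+1) θ} with hAdef
      have h1 : ∀ θ ∈ A, Mx σ F (n+1) θ - Mx σ F n (σ θ) ≤ F θ := by
        intro θ hθ
        have h2 := Mx_succ_le (σ := σ) (F := F) n θ
        have hpos : 0 < Mx σ F (n+1) θ := hθ
        rcases le_or_gt (F θ + Mx σ F n (σ θ)) 0 with hc | hc
        · rw [max_eq_left hc] at h2; linarith
        · rw [max_eq_right hc.le] at h2; linarith
      have h3 : ∫ θ in A, (Mx σ F (n+1) θ - Mx σ F n (σ θ)) ∂μ ≤ ∫ θ in A, F θ ∂μ :=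
        setIntegral_mono_on ((intMx (n+1)).sub (intMxσ n)).integrableOn
          intF.integrableOn (hA (n+1)) h1
      have h4 : ∫ θ in A, Mx σ F (n+1) θ ∂μ = ∫ θ, Mx σ F (n+1) θ ∂μ := by
        have hz : ∫ θ in Aᶜ, Mx σ F (n+1) θ ∂μ = 0 := by
          rw [setIntegral_congr_fun (hA (n+1)).compl
            (fun θ hθ => le_antisymm (not_lt.1 (by simpa using hθ)) (Mx_nonneg (n+1) θ))]
          simp
        have h5 := integral_add_compl (hA (n+1)) (intMx (n+1))
        rw [hz, add_zero] at h5
        exact h5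
      have h6 : ∫ θ in A, Mx σ F n (σ θ) ∂μ ≤ ∫ θ, Mx σ F n (σ θ) ∂μ :=
        setIntegral_le_integral (intMxσ n) (ae_of_all _ fun θ => Mx_nonneg n (σ θ))
      have h7 : ∫ θ, Mx σ F n (σ θ) ∂μ = ∫ θ, Mx σ F n θ ∂μ := by
        have := integral_map (μ := μ) (f := Mx σ F n) hσm.aemeasurable
          (by rw [hσ.map_eq]; exact (Mx_meas hσm hF n).aestronglyMeasurable)
        rw [hσ.map_eq] at this
        exact this.symm
      have h8 : ∫ θ, Mx σ F n θ ∂μ ≤ ∫ θ, Mx σ F (n+1) θ ∂μ :=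
        integral_mono (intMx n) (intMx (n+1)) (fun θ => Mx_mono n θ)
      have h9 : ∫ θ in A, (Mx σ F (n+1) θ - Mx σ F n (σ θ)) ∂μ
          = ∫ θ in A, Mx σ F (n+1) θ ∂μ - ∫ θ in A, Mx σ F n (σ θ) ∂μ :=
        integral_sub (intMx (n+1)).integrableOn (intMxσ n).integrableOn
      linarith
  have hlim := tendsto_setIntegral_of_monotone hA hmono intF.integrableOn
  exact ge_of_tendsto hlim (Eventually.of_forall step)

lemma ae_limsup_avg_le (hσm : Measurable σ) (hσ : Ergodic σ μ)
    (hF : Measurable F) (hK : ∀ θ, |F θ| ≤ K) :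
    ∀ᵐ θ ∂μ, limsup (fun n => Sn σ F n θ / n) atTop ≤ ∫ θ, F θ ∂μ := by
  set γ0 := ∫ θ, F θ ∂μ with hγ0
  have intF : Integrable F μ := int_of_bdd hF hK
  have havg : ∀ θ n, |Sn σ F n θ / n| ≤ max K 0 := fun θ n => avg_abs hK n θ
  -- the key invariance of the limsup of averages
  have key : ∀ θ : Θ, limsup (fun n => Sn σ F n (σ θ) / n) atTop
      = limsup (fun n => Sn σ F n θ / n) atTop := by
    intro θ
    refine limsup_eq_limsup_of_tendsto_sub (K := max K 0)
      (fun n => havg (σ θ) n) (fun n => havg θ n) ?_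
    have hdiff : ∀ n : ℕ, Sn σ F n (σ θ) / n - Sn σ F n θ / n = (F (σ^[n] θ) - F θ) / n := by
      intro n
      rcases Nat.eq_zero_or_pos n with rfl | hn
      · simp
      · have hn' : (n:ℝ) ≠ 0 := by positivity
        have e1 : Sn σ F n (σ θ) = Sn σ F n θ + F (σ^[n] θ) - F θ := by
          have ha := Sn_succ (σ := σ) (F := F) n θ
          have hb := Sn_succ_right (σ := σ) (F := F) n θ
          linarith
        rw [e1]; field_simp; ring
    simp only [hdiff]
    refine squeeze_zero_norm ?_ (tendsto_const_div_atTop_nhds_zero_nat (2 * K))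
    · intro n
      rcases Nat.eq_zero_or_pos n with rfl | hn
      · simp
      · have hn' : (0:ℝ) < n := by exact_mod_cast hn
        rw [Real.norm_eq_abs, abs_div, abs_of_pos hn']
        gcongr
        calc |F (σ^[n] θ) - F θ| ≤ |F (σ^[n] θ)| + |F θ| := abs_sub _ _
          _ ≤ 2 * K := by have := hK (σ^[n] θ); have := hK θ; linarith
  suffices hsuf : ∀ m : ℕ, ∀ᵐ θ ∂μ, limsup (fun n => Sn σ F n θ / n) atTop ≤ γ0 + 1/(m+1) by
    filter_upwards [ae_all_iff.2 hsuf] with θ hθ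
    refine le_of_forall_pos_le_add fun ε hε => ?_
    obtain ⟨m, hm⟩ := exists_nat_one_div_lt hε
    exact (hθ m).trans (by push_cast; push_cast at hm; linarith)
  intro m
  set ε : ℝ := 1/(m+1) with hεdef
  have hε : 0 < ε := by positivity
  set E := {θ | γ0 + ε < limsup (fun n => Sn σ F n θ / n) atTop} with hEdef
  have hEmeas : MeasurableSet E :=
    measurableSet_lt measurable_const
      (Measurable.limsup fun n => (Sn_meas hσm hF n).div_const _)
  have hEinv : σ ⁻¹' E = E := by
    ext θ
    simp only [hEdef, Set.mem_preimage, Set.mem_setOf_eq, key θ]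
  rcases hσ.measure_self_or_compl_eq_zero hEmeas hEinv with h0 | h1
  · rw [ae_iff]
    have hset : {θ | ¬ limsup (fun n => Sn σ F n θ / ↑n) atTop ≤ γ0 + ε} = E := by
      ext θ; rw [hEdef]; simp only [Set.mem_setOf_eq, not_le]
    rwa [hset]
  · exfalso
    set F' := fun θ => F θ - (γ0 + ε) with hF'def
    have hF' : Measurable F' := hF.sub measurable_const
    have hK' : ∀ θ, |F' θ| ≤ K + |γ0 + ε| := fun θ =>
      (abs_sub _ _).trans (add_le_add (hK θ) le_rfl)
    have intF' : Integrable F' μ := int_of_bdd hF' hK'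
    have hSn' : ∀ n θ, Sn σ F' n θ = Sn σ F n θ - n * (γ0 + ε) := by
      intro n θ
      simp [Sn, hF'def, Finset.sum_sub_distrib, mul_comm]
      ring
    have hsub : E ⊆ ⋃ n, {θ | 0 < Mx σ F' n θ} := by
      intro θ hθ
      have hfreq : ∃ᶠ n in atTop, γ0 + ε < Sn σ F n θ / n :=
        frequently_lt_of_lt_limsup
          ((bddL_of_abs (fun n => havg θ n)).isCoboundedUnder_le) hθ
      obtain ⟨n, hn2, hn1⟩ := (hfreq.and_eventually (eventually_ge_atTop 1)).exists
      refine Set.mem_iUnion.2 ⟨n, ?_⟩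
      have hnpos : (0:ℝ) < n := by exact_mod_cast hn1
      have hpos : 0 < Sn σ F' n θ := by
        rw [hSn' n θ]
        have := (lt_div_iff₀ hnpos).1 hn2
        nlinarith
      obtain ⟨j, rfl⟩ : ∃ j, n = j + 1 := ⟨n - 1, by omega⟩
      exact lt_of_lt_of_le hpos (Sn_le_Mx j θ)
    have hA1 : μ ((⋃ n, {θ | 0 < Mx σ F' n θ})ᶜ) = 0 :=
      measure_mono_null (Set.compl_subset_compl.2 hsub) h1
    have hmax := maximal hσm hσ.toMeasurePreserving hF' hK'
    have hAmeas : MeasurableSet (⋃ n, {θ | 0 < Mx σ F' n θ}) :=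
      MeasurableSet.iUnion fun n => measurableSet_lt measurable_const (Mx_meas hσm hF' n)
    have heq : ∫ θ in ⋃ n, {θ | 0 < Mx σ F' n θ}, F' θ ∂μ = ∫ θ, F' θ ∂μ := by
      have h5 := integral_add_compl hAmeas intF'
      have h6 : ∫ θ in (⋃ n, {θ | 0 < Mx σ F' n θ})ᶜ, F' θ ∂μ = 0 :=
        setIntegral_measure_zero _ hA1
      linarith
    have hval : ∫ θ, F' θ ∂μ = -ε := by
      rw [hF'def]
      rw [integral_sub intF (integrable_const _), integral_const]
      simp [hγ0]
    rw [heq, hval] at hmax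
    linarith

lemma ae_le_liminf_avg (hσm : Measurable σ) (hσ : Ergodic σ μ)
    (hF : Measurable F) (hK : ∀ θ, |F θ| ≤ K) :
    ∀ᵐ θ ∂μ, (∫ θ, F θ ∂μ) ≤ liminf (fun n => Sn σ F n θ / n) atTop := by
  set γ0 := ∫ θ, F θ ∂μ with hγ0
  have intF : Integrable F μ := int_of_bdd hF hK
  have havg : ∀ θ n, |Sn σ F n θ / n| ≤ max K 0 := fun θ n => avg_abs hK n θ
  have key : ∀ θ : Θ, liminf (fun n => Sn σ F n (σ θ) / n) atTop
      = liminf (fun n => Sn σ F n θ / n) atTop := by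
    intro θ
    refine liminf_eq_liminf_of_tendsto_sub (K := max K 0)
      (fun n => havg (σ θ) n) (fun n => havg θ n) ?_
    have hdiff : ∀ n : ℕ, Sn σ F n (σ θ) / n - Sn σ F n θ / n = (F (σ^[n] θ) - F θ) / n := by
      intro n
      rcases Nat.eq_zero_or_pos n with rfl | hn
      · simp
      · have hn' : (n:ℝ) ≠ 0 := by positivity
        have e1 : Sn σ F n (σ θ) = Sn σ F n θ + F (σ^[n] θ) - F θ := by
          have ha := Sn_succ (σ := σ) (F := F) n θ
          have hb := Sn_succ_right (σ := σ) (F := F) n θ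
          linarith
        rw [e1]; field_simp; ring
    simp only [hdiff]
    refine squeeze_zero_norm ?_ (tendsto_const_div_atTop_nhds_zero_nat (2 * K))
    · intro n
      rcases Nat.eq_zero_or_pos n with rfl | hn
      · simp
      · have hn' : (0:ℝ) < n := by exact_mod_cast hn
        rw [Real.norm_eq_abs, abs_div, abs_of_pos hn']
        gcongr
        calc |F (σ^[n] θ) - F θ| ≤ |F (σ^[n] θ)| + |F θ| := abs_sub _ _
          _ ≤ 2 * K := by have := hK (σ^[n] θ); have := hK θ; linarith
  suffices hsuf : ∀ m : ℕ, ∀ᵐ θ ∂μ, γ0 - 1/(m+1) ≤ liminf (fun n => Sn σ F n θ / n) atTop by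
    filter_upwards [ae_all_iff.2 hsuf] with θ hθ
    by_contra hcon
    push_neg at hcon
    obtain ⟨m, hm⟩ := exists_nat_one_div_lt (sub_pos.2 hcon)
    have := hθ m
    push_cast at hm this
    linarith
  intro m
  set ε : ℝ := 1/(m+1) with hεdef
  have hε : 0 < ε := by positivity
  set E := {θ | liminf (fun n => Sn σ F n θ / n) atTop < γ0 - ε} with hEdef
  have hEmeas : MeasurableSet E :=
    measurableSet_lt (Measurable.liminf fun n => (Sn_meas hσm hF n).div_const _)
      measurable_const
  have hEinv : σ ⁻¹' E = E := by
    ext θ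
    simp only [hEdef, Set.mem_preimage, Set.mem_setOf_eq, key θ]
  rcases hσ.measure_self_or_compl_eq_zero hEmeas hEinv with h0 | h1
  · rw [ae_iff]
    have hset : {θ | ¬ γ0 - ε ≤ liminf (fun n => Sn σ F n θ / ↑n) atTop} = E := by
      ext θ; rw [hEdef]; simp only [Set.mem_setOf_eq, not_le]
    rwa [hset]
  · exfalso
    set F' := fun θ => (γ0 - ε) - F θ with hF'def
    have hF' : Measurable F' := measurable_const.sub hF
    have hK' : ∀ θ, |F' θ| ≤ |γ0 - ε| + K := fun θ =>
      (abs_sub _ _).trans (add_le_add le_rfl (hK θ))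
    have intF' : Integrable F' μ := int_of_bdd hF' hK'
    have hSn' : ∀ n θ, Sn σ F' n θ = n * (γ0 - ε) - Sn σ F n θ := by
      intro n θ
      simp [Sn, hF'def, Finset.sum_sub_distrib, mul_comm]
      ring
    have hsub : E ⊆ ⋃ n, {θ | 0 < Mx σ F' n θ} := by
      intro θ hθ
      have hfreq : ∃ᶠ n in atTop, Sn σ F n θ / n < γ0 - ε :=
        frequently_lt_of_liminf_lt
          ((bddU_of_abs (fun n => havg θ n)).isCoboundedUnder_ge) hθ
      obtain ⟨n, hn2, hn1⟩ := (hfreq.and_eventually (eventually_ge_atTop 1)).exists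
      refine Set.mem_iUnion.2 ⟨n, ?_⟩
      have hnpos : (0:ℝ) < n := by exact_mod_cast hn1
      have hpos : 0 < Sn σ F' n θ := by
        rw [hSn' n θ]
        have := (div_lt_iff₀ hnpos).1 hn2
        nlinarith
      obtain ⟨j, rfl⟩ : ∃ j, n = j + 1 := ⟨n - 1, by omega⟩
      exact lt_of_lt_of_le hpos (Sn_le_Mx j θ)
    have hA1 : μ ((⋃ n, {θ | 0 < Mx σ F' n θ})ᶜ) = 0 :=
      measure_mono_null (Set.compl_subset_compl.2 hsub) h1
    have hmax := maximal hσm hσ.toMeasurePreserving hF' hK'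
    have hAmeas : MeasurableSet (⋃ n, {θ | 0 < Mx σ F' n θ}) :=
      MeasurableSet.iUnion fun n => measurableSet_lt measurable_const (Mx_meas hσm hF' n)
    have heq : ∫ θ in ⋃ n, {θ | 0 < Mx σ F' n θ}, F' θ ∂μ = ∫ θ, F' θ ∂μ := by
      have h5 := integral_add_compl hAmeas intF'
      have h6 : ∫ θ in (⋃ n, {θ | 0 < Mx σ F' n θ})ᶜ, F' θ ∂μ = 0 :=
        setIntegral_measure_zero _ hA1
      linarith
    have hval : ∫ θ, F' θ ∂μ = -ε := by
      rw [hF'def]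
      rw [integral_sub (integrable_const _) intF, integral_const]
      simp [hγ0]
    rw [heq, hval] at hmax
    linarith

lemma ae_liminf_avg_eq (hσm : Measurable σ) (hσ : Ergodic σ μ)
    (hF : Measurable F) (hK : ∀ θ, |F θ| ≤ K) :
    ∀ᵐ θ ∂μ, liminf (fun n => Sn σ F n θ / n) atTop = ∫ θ, F θ ∂μ := by
  filter_upwards [ae_limsup_avg_le hσm hσ hF hK, ae_le_liminf_avg hσm hσ hF hK] with θ h1 h2
  refine le_antisymm ?_ h2
  refine (liminf_le_limsup ?_ ?_).trans h1
  · exact bddU_of_abs (fun n => avg_abs hK n θ)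
  · exact bddL_of_abs (fun n => avg_abs hK n θ)

end ErgAux

namespace Setting

variable {Θ : Type*} [MeasurableSpace Θ] (S : Setting Θ)

lemma h_contOn : ContinuousOn S.h (Set.Ici 0) :=
  fun x hx => (S.h_hasDeriv x hx).continuousWithinAt

lemma h_strictMono : StrictMonoOn S.h (Set.Ici 0) := by
  apply strictMonoOn_of_deriv_pos (convex_Ici 0) S.h_contOn
  intro x hx
  rw [interior_Ici] at hx
  have hd : HasDerivAt S.h (S.h' x) x :=
    (S.h_hasDeriv x (Set.mem_Ici.2 (le_of_lt hx))).hasDerivAt (Ici_mem_nhds hx)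
  rw [hd.deriv]
  exact S.h'_pos x hx

lemma h_pos {x : ℝ} (hx : 0 < x) : 0 < S.h x := by
  have := S.h_strictMono Set.self_mem_Ici (Set.mem_Ici.2 hx.le) hx
  rwa [S.h_zero] at this

lemma ratio_anti {x y : ℝ} (hx : 0 < x) (hxy : x ≤ y) : S.h y / y ≤ S.h x / x := by
  have hy : 0 < y := lt_of_lt_of_le hx hxy
  have key : (x / y) * S.h y ≤ S.h x := by
    have hb : (0:ℝ) ≤ 1 - x / y := by
      have : x / y ≤ 1 := (div_le_one hy).2 hxy
      linarith
    have hcc := (S.h_strictConcave.concaveOn).2 (Set.mem_Ici.2 hy.le)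
      (Set.mem_Ici.2 (le_refl (0:ℝ))) (div_nonneg hx.le hy.le) hb (by ring)
    have hxx : x / y * y + (1 - x / y) * 0 = x := by field_simp; ring
    rw [smul_eq_mul, smul_eq_mul, smul_eq_mul, smul_eq_mul, S.h_zero, hxx,
      mul_zero, add_zero] at hcc
    exact hcc
  rw [div_le_div_iff₀ hy hx]
  have h3 := mul_le_mul_of_nonneg_right key hy.le
  have h4 : (x / y) * S.h y * y = S.h y * x := by field_simp
  rw [h4] at h3
  linarith

lemma ratio_tendsto : Tendsto (fun y => S.h y / y) (𝓝[>] (0:ℝ)) (𝓝 1) := by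
  have hd := S.h_hasDeriv 0 Set.self_mem_Ici
  rw [hasDerivWithinAt_iff_tendsto_slope, S.h'_zero, Set.Ici_sdiff_left] at hd
  apply Tendsto.congr' _ hd
  filter_upwards [self_mem_nhdsWithin] with y hy
  simp [slope_def_field, S.h_zero]

lemma h_le_self {x : ℝ} (hx : 0 ≤ x) : S.h x ≤ x := by
  rcases eq_or_lt_of_le hx with rfl | hx'
  · rw [S.h_zero]
  · have h1 : S.h x / x ≤ 1 := by
      refine ge_of_tendsto S.ratio_tendsto ?_
      filter_upwards [Ioc_mem_nhdsGT_of_mem ⟨le_refl (0:ℝ), hx'⟩] with y hy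
      exact S.ratio_anti hy.1 hy.2
    calc S.h x = (S.h x / x) * x := by field_simp
      _ ≤ 1 * x := mul_le_mul_of_nonneg_right h1 hx'.le
      _ = x := one_mul x

lemma h_nonneg {x : ℝ} (hx : 0 ≤ x) : 0 ≤ S.h x := by
  rcases eq_or_lt_of_le hx with rfl | hx'
  · rw [S.h_zero]
  · exact (S.h_pos hx').le

lemma f_pos (t : ℝ) (θ : Θ) {x : ℝ} (hx : 0 < x) : 0 < S.f t θ x := by
  unfold f
  have := S.h_pos hx
  have := S.g_pos θ
  positivity

lemma f_nonneg (t : ℝ) (θ : Θ) {x : ℝ} (hx : 0 ≤ x) : 0 ≤ S.f t θ x := by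
  unfold f
  have := S.h_nonneg hx
  have := (S.g_pos θ).le
  positivity

lemma f_mono (t : ℝ) (θ : Θ) {x y : ℝ} (hx : 0 ≤ x) (hxy : x ≤ y) :
    S.f t θ x ≤ S.f t θ y := by
  unfold f
  have hh : S.h x ≤ S.h y := S.h_strictMono.monotoneOn (Set.mem_Ici.2 hx)
    (Set.mem_Ici.2 (hx.trans hxy)) hxy
  have : (0:ℝ) ≤ Real.exp (-t) * S.g θ := (mul_pos (Real.exp_pos _) (S.g_pos _)).le
  exact mul_le_mul_of_nonneg_left hh this

lemma fn_succ_left (t : ℝ) (n : ℕ) (θ : Θ) (x : ℝ) :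
    S.fn t (n+1) θ x = S.fn t n (S.T θ) (S.f t θ x) := by
  induction n with
  | zero => simp [fn]
  | succ n ih =>
    show S.f t (S.T^[n+1] θ) (S.fn t (n+1) θ x) = S.fn t (n+1) (S.T θ) (S.f t θ x)
    rw [ih]
    show S.f t (S.T^[n+1] θ) (S.fn t n (S.T θ) (S.f t θ x))
      = S.f t (S.T^[n] (S.T θ)) (S.fn t n (S.T θ) (S.f t θ x))
    rw [Function.iterate_succ_apply]

lemma fnTinv_succ (t : ℝ) (n : ℕ) (θ : Θ) (x : ℝ) :
    S.fn t (n+1) (S.Tinv^[n+1] θ) x = S.fn t n (S.Tinv^[n] θ) (S.f t (S.Tinv^[n+1] θ) x) := by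
  rw [fn_succ_left]
  congr 1
  rw [Function.iterate_succ_apply']
  exact S.right_inv _

/-- partial sums of `log g ∘ Tinv^[k+1] - t`. -/
noncomputable def Aseq (t : ℝ) (θ : Θ) (n : ℕ) : ℝ :=
  ∑ k ∈ Finset.range n, (Real.log (S.g (S.Tinv^[k+1] θ)) - t)

lemma Aseq_succ (t : ℝ) (θ : Θ) (n : ℕ) :
    S.Aseq t θ (n+1) = S.Aseq t θ n + (Real.log (S.g (S.Tinv^[n+1] θ)) - t) :=
  Finset.sum_range_succ _ n

lemma Aseq_eq (t : ℝ) (θ : Θ) {n : ℕ} (hn : 0 < n) :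
    S.Aseq t θ n = n * (S.Γn n θ - t) := by
  have hn' : (n:ℝ) ≠ 0 := Nat.cast_ne_zero.2 hn.ne'
  unfold Aseq Γn
  rw [Finset.sum_sub_distrib, Finset.sum_const, Finset.card_range]
  field_simp
  rw [nsmul_eq_mul]

lemma fn_mem (t : ℝ) {M : ℝ} (hM : 0 < M) (hMf : ∀ θ', S.f t θ' M < M) (θ : Θ) :
    ∀ n, ∀ x, 0 < x → x ≤ M → 0 < S.fn t n θ x ∧ S.fn t n θ x ≤ M := by
  intro n
  induction n with
  | zero => exact fun x hx hxM => ⟨hx, hxM⟩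
  | succ n ih =>
    intro x hx hxM
    obtain ⟨h1, h2⟩ := ih x hx hxM
    refine ⟨S.f_pos t _ h1, ?_⟩
    exact (S.f_mono t _ h1.le h2).trans (hMf _).le

lemma fn_upper (t : ℝ) (θ : Θ) :
    ∀ n, ∀ x : ℝ, 0 ≤ x → S.fn t n (S.Tinv^[n] θ) x ≤ x * Real.exp (S.Aseq t θ n) := by
  intro n
  induction n with
  | zero => intro x hx; simp [fn, Aseq]
  | succ n ih =>
    intro x hx
    rw [S.fnTinv_succ]
    set θ' := S.Tinv^[n+1] θ with hθ'
    set y := S.f t θ' x with hy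
    have hy0 : 0 ≤ y := S.f_nonneg t θ' hx
    have hyb : y ≤ Real.exp (Real.log (S.g θ') - t) * x := by
      rw [hy]
      unfold f
      calc Real.exp (-t) * S.g θ' * S.h x ≤ Real.exp (-t) * S.g θ' * x := by
            have h1 := S.h_le_self hx
            have : (0:ℝ) ≤ Real.exp (-t) * S.g θ' := (mul_pos (Real.exp_pos _) (S.g_pos _)).le
            exact mul_le_mul_of_nonneg_left h1 this
        _ = Real.exp (Real.log (S.g θ') - t) * x := by
            rw [Real.exp_sub, Real.exp_log (S.g_pos _), Real.exp_neg, div_eq_mul_inv]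
            ring
    calc S.fn t n (S.Tinv^[n] θ) y ≤ y * Real.exp (S.Aseq t θ n) := ih y hy0
      _ ≤ (Real.exp (Real.log (S.g θ') - t) * x) * Real.exp (S.Aseq t θ n) :=
          mul_le_mul_of_nonneg_right hyb (Real.exp_pos _).le
      _ = x * Real.exp (S.Aseq t θ (n+1)) := by
          rw [S.Aseq_succ, Real.exp_add]
          ring

lemma fn_lower (t : ℝ) (θ : Θ) {M ε C₀ δ r c : ℝ} (hM : 0 < M)
    (hMf : ∀ θ', S.f t θ' M < M)
    (hε : 0 < ε) (hC₀ : 0 ≤ C₀) (hδ0 : 0 < δ) (hδM : δ ≤ M)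
    (hδ : ∀ x, 0 < x → x ≤ δ → Real.exp (-(ε/2)) * x ≤ S.h x)
    (hr : 0 < r) (hrle : ∀ x, 0 < x → x ≤ M → r * x ≤ S.h x)
    (hc : 0 < c) (hcg : ∀ θ', c ≤ S.g θ')
    (hA : ∀ p : ℕ, ε * p - C₀ ≤ S.Aseq t θ p) :
    ∀ n, ∀ x, 0 < x → x ≤ M →
      min (Real.exp (-t) * c * r * δ * Real.exp (-C₀))
        (x * Real.exp (S.Aseq t θ n - ε/2 * n)) ≤ S.fn t n (S.Tinv^[n] θ) x := by
  set β := Real.exp (-t) * c * r * δ * Real.exp (-C₀) with hβ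
  intro n
  induction n with
  | zero =>
    intro x hx hxM
    have : S.Aseq t θ 0 - ε/2 * (0:ℕ) = 0 := by simp [Aseq]
    rw [this, Real.exp_zero, mul_one]
    exact min_le_right _ _
  | succ n ih =>
    intro x hx hxM
    rw [S.fnTinv_succ]
    set θ' := S.Tinv^[n+1] θ with hθ'
    set y := S.f t θ' x with hy
    have hy0 : 0 < y := S.f_pos t θ' hx
    have hyM : y ≤ M := (S.f_mono t θ' hx.le hxM).trans (hMf θ').le
    have key := ih y hy0 hyM
    rcases le_or_gt x δ with hxδ | hxδ
    · -- below the threshold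
      have hstep : Real.exp ((Real.log (S.g θ') - t) - ε/2) * x ≤ y := by
        rw [hy]
        unfold f
        have h1 := hδ x hx hxδ
        have h2 : Real.exp ((Real.log (S.g θ') - t) - ε/2) * x
            = Real.exp (-t) * S.g θ' * (Real.exp (-(ε/2)) * x) := by
          rw [show (Real.log (S.g θ') - t) - ε/2
              = Real.log (S.g θ') + (-t) + (-(ε/2)) by ring,
            Real.exp_add, Real.exp_add, Real.exp_log (S.g_pos _)]
          ring
        rw [h2]
        have hpos : (0:ℝ) ≤ Real.exp (-t) * S.g θ' := (mul_pos (Real.exp_pos _) (S.g_pos _)).le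
        exact mul_le_mul_of_nonneg_left h1 hpos
      refine le_trans (min_le_min le_rfl ?_) key
      have hexp : S.Aseq t θ (n+1) - ε/2 * ((n:ℝ)+1)
          = ((Real.log (S.g θ') - t) - ε/2) + (S.Aseq t θ n - ε/2 * n) := by
        rw [S.Aseq_succ]; ring
      push_cast
      rw [hexp, Real.exp_add]
      calc x * (Real.exp ((Real.log (S.g θ') - t) - ε/2) * Real.exp (S.Aseq t θ n - ε/2 * n))
          = (Real.exp ((Real.log (S.g θ') - t) - ε/2) * x) * Real.exp (S.Aseq t θ n - ε/2 * n) := by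
            ring
        _ ≤ y * Real.exp (S.Aseq t θ n - ε/2 * n) :=
            mul_le_mul_of_nonneg_right hstep (Real.exp_pos _).le
    · -- above the threshold
      have hstep : Real.exp (-t) * c * r * δ ≤ y := by
        rw [hy]
        unfold f
        have h1 := hrle x hx hxM
        have h2 : Real.exp (-t) * c * r * δ ≤ Real.exp (-t) * S.g θ' * (r * x) := by
          have hcd : c * δ ≤ S.g θ' * x :=
            mul_le_mul (hcg θ') hxδ.le hδ0.le (lt_of_lt_of_le hc (hcg θ')).le
          calc Real.exp (-t) * c * r * δ = (Real.exp (-t) * r) * (c * δ) := by ring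
            _ ≤ (Real.exp (-t) * r) * (S.g θ' * x) := by
                apply mul_le_mul_of_nonneg_left hcd
                positivity
            _ = Real.exp (-t) * S.g θ' * (r * x) := by ring
        refine h2.trans ?_
        have hpos : (0:ℝ) ≤ Real.exp (-t) * S.g θ' := (mul_pos (Real.exp_pos _) (S.g_pos _)).le
        exact mul_le_mul_of_nonneg_left h1 hpos
      have hAn : -C₀ ≤ S.Aseq t θ n - ε/2 * n := by
        have h5 := hA n
        have h6 : 0 ≤ ε * n := by positivity
        nlinarith
      have h2 : β ≤ y * Real.exp (S.Aseq t θ n - ε/2 * n) := by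
        rw [hβ]
        exact mul_le_mul hstep (Real.exp_le_exp.2 hAn) (Real.exp_pos _).le hy0.le
      calc min β (x * Real.exp (S.Aseq t θ (n+1) - ε/2 * ((n:ℕ)+1:ℕ))) ≤ β := min_le_left _ _
        _ = min β (y * Real.exp (S.Aseq t θ n - ε/2 * n)) := (min_eq_left h2).symm
        _ ≤ S.fn t n (S.Tinv^[n] θ) y := key

lemma Gamman_lb {c : ℝ} (hc : 0 < c) (hcg : ∀ θ', c ≤ S.g θ') (θ : Θ) (n : ℕ) :
    min (Real.log c) 0 ≤ S.Γn n θ := by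
  rcases Nat.eq_zero_or_pos n with rfl | hn
  · simp [Γn, min_le_right]
  · have hn' : (0:ℝ) < n := by exact_mod_cast hn
    refine (min_le_left _ _).trans ?_
    unfold Γn
    rw [le_div_iff₀ hn']
    calc Real.log c * n = ∑ _k ∈ Finset.range n, Real.log c := by
          simp [mul_comm]
      _ ≤ ∑ k ∈ Finset.range n, Real.log (S.g (S.Tinv^[k+1] θ)) :=
          Finset.sum_le_sum fun k _ => Real.log_le_log hc (hcg _)

lemma Gamman_ub {Cg : ℝ} (hCg : ∀ θ', S.g θ' ≤ Cg) (θ : Θ) (n : ℕ) :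
    S.Γn n θ ≤ max (Real.log Cg) 0 := by
  rcases Nat.eq_zero_or_pos n with rfl | hn
  · simp [Γn, le_max_right]
  · have hn' : (0:ℝ) < n := by exact_mod_cast hn
    refine le_trans ?_ (le_max_left _ _)
    unfold Γn
    rw [div_le_iff₀ hn']
    calc ∑ k ∈ Finset.range n, Real.log (S.g (S.Tinv^[k+1] θ))
        ≤ ∑ _k ∈ Finset.range n, Real.log Cg :=
          Finset.sum_le_sum fun k _ => Real.log_le_log (S.g_pos _) (hCg _)
      _ = Real.log Cg * n := by simp [mul_comm]

lemma psi_pos {t M : ℝ} (hM : 0 < M) (hMf : ∀ θ', S.f t θ' M < M) (θ : Θ) (n : ℕ) :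
    0 < S.ψ t M n θ :=
  (S.fn_mem t hM hMf _ n M hM le_rfl).1

lemma phi_zero_of_gt {c Cg : ℝ} (hc : 0 < c) (hcg : ∀ θ', c ≤ S.g θ')
    (hCg : ∀ θ', S.g θ' ≤ Cg) {t M : ℝ} (hM : 0 < M) (hMf : ∀ θ', S.f t θ' M < M)
    {θ : Θ} (hgt : S.Γ θ < t) : S.φ t M θ = 0 := by
  have hbddL : IsBoundedUnder (· ≥ ·) atTop (fun n => S.Γn n θ) :=
    isBoundedUnder_of ⟨min (Real.log c) 0, fun n => S.Gamman_lb hc hcg θ n⟩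
  have hΓdef : S.Γ θ = liminf (fun n => S.Γn n θ) atTop := rfl
  set s := (S.Γ θ + t)/2 with hs
  have hfreq : ∃ᶠ n in atTop, S.Γn n θ < s :=
    frequently_lt_of_liminf_lt
      ((isBoundedUnder_of ⟨max (Real.log Cg) 0, fun n => S.Gamman_ub hCg θ n⟩ :
        IsBoundedUnder (· ≤ ·) atTop (fun n => S.Γn n θ)).isCoboundedUnder_ge)
      (by rw [← hΓdef, hs]; linarith)
  have hnonneg : 0 ≤ S.φ t M θ :=
    le_ciInf fun n => (S.psi_pos hM hMf θ (n+1)).le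
  have hbdd : BddBelow (Set.range fun n => S.ψ t M (n+1) θ) :=
    ⟨0, fun z ⟨n, hn⟩ => hn ▸ (S.psi_pos hM hMf θ (n+1)).le⟩
  have hmain : ∀ r : ℝ, 0 < r → S.φ t M θ ≤ r := by
    intro r hr
    have hst : Real.exp (s - t) < 1 := by
      rw [Real.exp_lt_one_iff]
      rw [hs]; linarith
    have htend : Tendsto (fun n : ℕ => M * Real.exp (s - t) ^ n) atTop (𝓝 0) := by
      have := tendsto_pow_atTop_nhds_zero_of_lt_one (Real.exp_pos _).le hst
      simpa using this.const_mul M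
    have hev : ∀ᶠ n : ℕ in atTop, M * Real.exp (s - t) ^ n < r :=
      htend.eventually_lt_const hr
    obtain ⟨n, hΓn, hn1, hsm⟩ :=
      (hfreq.and_eventually ((eventually_ge_atTop 1).and hev)).exists
    obtain ⟨m, rfl⟩ : ∃ m, n = m + 1 := ⟨n - 1, by omega⟩
    have hup : S.ψ t (M) (m+1) θ ≤ M * Real.exp (S.Aseq t θ (m+1)) :=
      S.fn_upper t θ (m+1) M hM.le
    have hAeq : S.Aseq t θ (m+1) = (m+1 : ℕ) * (S.Γn (m+1) θ - t) :=
      S.Aseq_eq t θ (Nat.succ_pos m)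
    have hA : S.Aseq t θ (m+1) ≤ (m+1 : ℕ) * (s - t) := by
      rw [hAeq]
      have : ((m:ℝ)+1) > 0 := by positivity
      have h7 : S.Γn (m+1) θ - t ≤ s - t := by linarith
      push_cast
      nlinarith
    have h8 : S.ψ t M (m+1) θ < r := by
      refine lt_of_le_of_lt (hup.trans ?_) hsm
      have : Real.exp (S.Aseq t θ (m+1)) ≤ Real.exp (s-t) ^ (m+1 : ℕ) := by
        rw [← Real.exp_nat_mul]
        exact Real.exp_le_exp.2 (by exact_mod_cast hA)
      exact mul_le_mul_of_nonneg_left this hM.le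
    exact (ciInf_le hbdd m).trans h8.le
  have : S.φ t M θ ≤ 0 := le_of_forall_pos_le_add (fun r hr => (hmain r hr).trans (by linarith))
  linarith

lemma phi_pos_of_lt {c Cg : ℝ} (hc : 0 < c) (hcg : ∀ θ', c ≤ S.g θ')
    (hCg : ∀ θ', S.g θ' ≤ Cg) {t M : ℝ} (hM : 0 < M) (hMf : ∀ θ', S.f t θ' M < M)
    {θ : Θ} (hlt : t < S.Γ θ) : 0 < S.φ t M θ := by
  have hbddL : IsBoundedUnder (· ≥ ·) atTop (fun n => S.Γn n θ) :=
    isBoundedUnder_of ⟨min (Real.log c) 0, fun n => S.Gamman_lb hc hcg θ n⟩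
  set ε := (S.Γ θ - t)/2 with hε
  have hε0 : 0 < ε := by rw [hε]; linarith
  have hΓdef : S.Γ θ = liminf (fun n => S.Γn n θ) atTop := rfl
  have hev : ∀ᶠ n in atTop, t + ε < S.Γn n θ :=
    eventually_lt_of_lt_liminf (by rw [← hΓdef, hε]; linarith) hbddL
  obtain ⟨N0, hN0⟩ := eventually_atTop.1 hev
  set N := max N0 1 with hN
  set C₀ := ∑ p ∈ Finset.range N, |ε * p - S.Aseq t θ p| with hC₀def
  have hC₀ : 0 ≤ C₀ := by
    rw [hC₀def]
    exact Finset.sum_nonneg fun p _ => abs_nonneg _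
  have hA : ∀ p : ℕ, ε * p - C₀ ≤ S.Aseq t θ p := by
    intro p
    rcases lt_or_ge p N with hp | hp
    · have h1 : ε * p - S.Aseq t θ p ≤ |ε * p - S.Aseq t θ p| := le_abs_self _
      have h2 : |ε * p - S.Aseq t θ p| ≤ C₀ := by
        rw [hC₀def]
        exact Finset.single_le_sum (f := fun q : ℕ => |ε * q - S.Aseq t θ q|) (fun i _ => abs_nonneg _) (Finset.mem_range.2 hp)
      linarith
    · have hp1 : 1 ≤ p := le_trans (le_max_right N0 1) hp
      have hp0 : 0 < p := hp1
      have hΓp := hN0 p (le_trans (le_max_left N0 1) hp)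
      have hAeq := S.Aseq_eq t θ hp0
      have hppos : (0:ℝ) < p := by exact_mod_cast hp0
      have : ε * p ≤ S.Aseq t θ p := by
        rw [hAeq]
        have : ε ≤ S.Γn p θ - t := by linarith
        nlinarith
      linarith
  -- choose δ
  have hexp1 : Real.exp (-(ε/2)) < 1 := Real.exp_lt_one_iff.2 (by linarith)
  have hδev : ∀ᶠ y in 𝓝[>] (0:ℝ),
      Real.exp (-(ε/2)) < S.h y / y ∧ y ∈ Set.Ioc 0 M :=
    (S.ratio_tendsto.eventually (eventually_gt_nhds hexp1)).and
      (Ioc_mem_nhdsGT_of_mem ⟨le_refl (0:ℝ), hM⟩)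
  obtain ⟨δ, hδ1, hδ2⟩ := hδev.exists
  have hδ0 : 0 < δ := hδ2.1
  have hδM : δ ≤ M := hδ2.2
  have hδprop : ∀ x, 0 < x → x ≤ δ → Real.exp (-(ε/2)) * x ≤ S.h x := by
    intro x hx hxδ
    have h1 : S.h δ / δ ≤ S.h x / x := S.ratio_anti hx hxδ
    have h2 : Real.exp (-(ε/2)) ≤ S.h x / x := (hδ1.le).trans h1
    calc Real.exp (-(ε/2)) * x ≤ (S.h x / x) * x := mul_le_mul_of_nonneg_right h2 hx.le
      _ = S.h x := by field_simp
  set r := S.h M / M with hr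
  have hr0 : 0 < r := div_pos (S.h_pos hM) hM
  have hrle : ∀ x, 0 < x → x ≤ M → r * x ≤ S.h x := by
    intro x hx hxM
    have h1 : S.h M / M ≤ S.h x / x := S.ratio_anti hx hxM
    calc r * x ≤ (S.h x / x) * x := mul_le_mul_of_nonneg_right h1 hx.le
      _ = S.h x := by field_simp
  have hlow := S.fn_lower t θ hM hMf hε0 hC₀ hδ0 hδM hδprop hr0 hrle hc hcg hA
  set β := Real.exp (-t) * c * r * δ * Real.exp (-C₀) with hβ
  have hβ0 : 0 < β := by
    have := Real.exp_pos (-t)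
    have := Real.exp_pos (-C₀)
    rw [hβ]; positivity
  have hlb : ∀ n : ℕ, min β (M * Real.exp (-C₀)) ≤ S.ψ t M (n+1) θ := by
    intro n
    have h1 := hlow (n+1) M hM le_rfl
    refine le_trans (min_le_min le_rfl ?_) h1
    have h2 : -C₀ ≤ S.Aseq t θ (n+1) - ε/2 * ((n:ℝ)+1) := by
      have h3 := hA (n+1)
      have h4 : 0 ≤ ε * ((n:ℝ)+1) := by positivity
      push_cast at h3
      linarith
    have := Real.exp_le_exp.2 h2
    have h5 : M * Real.exp (-C₀) ≤ M * Real.exp (S.Aseq t θ (n+1) - ε/2 * ((n:ℝ)+1)) := by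
      exact mul_le_mul_of_nonneg_left this hM.le
    push_cast
    exact h5
  have hmin : 0 < min β (M * Real.exp (-C₀)) := by
    apply lt_min hβ0
    positivity
  exact lt_of_lt_of_le hmin (le_ciInf hlb)

theorem tc_eq_Gamma {c Cg : ℝ} (hc : 0 < c) (hcg : ∀ θ', c ≤ S.g θ')
    (hCg : ∀ θ', S.g θ' ≤ Cg) (M : ℝ → ℝ) (hM : ∀ t, 0 < M t)
    (hMf : ∀ t θ', S.f t θ' (M t) < M t) (θ : Θ) : S.tc M θ = S.Γ θ := by
  have hmem : ∀ t, S.Γ θ < t → t ∈ {t : ℝ | S.φ t (M t) θ = 0} := fun t ht =>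
    S.phi_zero_of_gt hc hcg hCg (hM t) (hMf t) ht
  have hne : {t : ℝ | S.φ t (M t) θ = 0}.Nonempty :=
    ⟨S.Γ θ + 1, hmem _ (by linarith)⟩
  have hlb : ∀ t ∈ {t : ℝ | S.φ t (M t) θ = 0}, S.Γ θ ≤ t := by
    intro t ht
    by_contra hcon
    push_neg at hcon
    have := S.phi_pos_of_lt hc hcg hCg (hM t) (hMf t) hcon
    rw [Set.mem_setOf_eq] at ht
    linarith
  have hbdd : BddBelow {t : ℝ | S.φ t (M t) θ = 0} := ⟨S.Γ θ, hlb⟩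
  refine le_antisymm ?_ (le_csInf hne hlb)
  refine le_of_forall_pos_le_add fun ε hε => ?_
  exact csInf_le hbdd (hmem (S.Γ θ + ε) (by linarith))

end Setting

/-- assuming `inf g > 0`, for an ergodic `T`-invariant probability measure
`μ` one has `μ(S_t) = 1` for `t = γ(μ)`, and `μ(S_t) = 0` for every `t ≠ γ(μ)`. -/
theorem stmt13 {Θ : Type*} [MeasurableSpace Θ] (S : Setting Θ)
    (hg : ∃ c : ℝ, 0 < c ∧ ∀ θ, c ≤ S.g θ)
    (M : ℝ → ℝ) (hM : ∀ t, 0 < M t) (hMf : ∀ t θ, S.f t θ (M t) < M t)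
    (μ : Measure Θ) [IsProbabilityMeasure μ] (hμ : Ergodic S.T μ) :
    μ (S.Sset M (S.γfn μ)) = 1 ∧ ∀ t : ℝ, t ≠ S.γfn μ → μ (S.Sset M t) = 0 := by
  classical
  obtain ⟨c, hc, hcg⟩ := hg
  obtain ⟨Cg, hCg⟩ := S.g_bdd
  set F : Θ → ℝ := fun θ => Real.log (S.g θ) with hFdef
  have hF : Measurable F := Real.measurable_log.comp S.g_meas
  set K : ℝ := max |Real.log c| |Real.log Cg| with hKdef
  have hK : ∀ θ, |F θ| ≤ K := by
    intro θ
    rw [abs_le]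
    constructor
    · have h1 : Real.log c ≤ F θ := Real.log_le_log hc (hcg θ)
      have h2 : -|Real.log c| ≤ Real.log c := neg_abs_le _
      have h3 : |Real.log c| ≤ K := le_max_left _ _
      linarith
    · have h1 : F θ ≤ Real.log Cg := Real.log_le_log (S.g_pos θ) (hCg θ)
      have h2 : Real.log Cg ≤ |Real.log Cg| := le_abs_self _
      have h3 : |Real.log Cg| ≤ K := le_max_right _ _
      linarith
  have hmpT : MeasurePreserving S.T μ μ := hμ.toMeasurePreserving
  have hmpσ : MeasurePreserving S.Tinv μ μ := by
    refine ⟨S.Tinv_meas, ?_⟩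
    have h1 : Measure.map S.Tinv (Measure.map S.T μ) = μ := by
      rw [Measure.map_map S.Tinv_meas S.T_meas]
      rw [S.left_inv.comp_eq_id, Measure.map_id]
    rwa [hmpT.map_eq] at h1
  have hergσ : Ergodic S.Tinv μ := by
    refine ⟨hmpσ, ⟨fun s hs hinv => ?_⟩⟩
    refine hμ.aeconst_set hs ?_
    calc S.T ⁻¹' s = S.T ⁻¹' (S.Tinv ⁻¹' s) := by rw [hinv]
      _ = (S.Tinv ∘ S.T) ⁻¹' s := rfl
      _ = s := by rw [S.left_inv.comp_eq_id]; rfl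
  have hBirk := ErgAux.ae_liminf_avg_eq S.Tinv_meas hergσ hF hK
  have hγrfl : (∫ θ, F θ ∂μ) = S.γfn μ := rfl
  rw [hγrfl] at hBirk
  set D := {θ | liminf (fun n => ErgAux.Sn S.Tinv F n θ / n) atTop = S.γfn μ} with hDdef
  have hDmeas : MeasurableSet D := by
    have hm : Measurable fun θ => liminf (fun n => ErgAux.Sn S.Tinv F n θ / n) atTop :=
      Measurable.liminf fun n => (ErgAux.Sn_meas S.Tinv_meas hF n).div_const _
    exact hm (measurableSet_singleton (S.γfn μ))
  have hD1 : ∀ᵐ θ ∂μ, θ ∈ D := hBirk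
  have hD2 : ∀ᵐ θ ∂μ, S.Tinv θ ∈ D := by
    have hD1' : ∀ᵐ y ∂(Measure.map S.Tinv μ), y ∈ D := by rwa [hmpσ.map_eq]
    exact (MeasureTheory.ae_map_iff S.Tinv_meas.aemeasurable hDmeas).1 hD1'
  have hΓeq : ∀ᵐ θ ∂μ, S.Γ θ = S.γfn μ := by
    filter_upwards [hD2] with θ hθ
    have hcongr : ∀ n, S.Γn n θ = ErgAux.Sn S.Tinv F n (S.Tinv θ) / n := by
      intro n
      unfold Setting.Γn ErgAux.Sn
      congr 1
    have hΓθ : S.Γ θ = liminf (fun n => ErgAux.Sn S.Tinv F n (S.Tinv θ) / n) atTop := by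
      simp only [Setting.Γ, hcongr]
    rw [hΓθ]
    exact hθ
  have h0 : μ {θ | ¬ (S.Γ θ = S.γfn μ)} = 0 := by rwa [ae_iff] at hΓeq
  have htc : ∀ θ, S.tc M θ = S.Γ θ := fun θ => S.tc_eq_Gamma hc hcg hCg M hM hMf θ
  constructor
  · have hcsub : (S.Sset M (S.γfn μ))ᶜ ⊆ {θ | ¬ (S.Γ θ = S.γfn μ)} := by
      intro θ hθ
      simp only [Set.mem_compl_iff, Setting.Sset, Set.mem_setOf_eq] at hθ ⊢
      rw [← htc θ]
      exact hθ
    have hc0 : μ ((S.Sset M (S.γfn μ))ᶜ) = 0 := measure_mono_null hcsub h0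
    have h1 : μ Set.univ ≤ μ (S.Sset M (S.γfn μ)) + μ ((S.Sset M (S.γfn μ))ᶜ) := by
      rw [← Set.union_compl_self (S.Sset M (S.γfn μ))]
      exact measure_union_le _ _
    rw [measure_univ, hc0, add_zero] at h1
    exact le_antisymm prob_le_one h1
  · intro t ht
    refine measure_mono_null ?_ h0
    intro θ hθ
    simp only [Setting.Sset, Set.mem_setOf_eq] at hθ
    simp only [Set.mem_setOf_eq]
    intro hcon
    apply ht
    rw [← hθ, htc θ, hcon]
end

section
/- In the topological setting, assume additionally that h is twice differentiable at 0 with h''(0) < 0. Then μ(N_{γ_max}) = 1 for every T-invariant Borel probability measure μ on Θ. -/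
open MeasureTheory Filter Topology

/-- The set of averaged exponents `γ(μ)` of `T`-invariant Borel probability measures. -/
def Setting.γSet {Θ : Type*} [MeasurableSpace Θ] (S : Setting Θ) : Set ℝ :=
  {x : ℝ | ∃ μ : MeasureTheory.Measure Θ, MeasureTheory.IsProbabilityMeasure μ ∧
    MeasureTheory.MeasurePreserving S.T μ μ ∧ x = S.γfn μ}

/-- `γ_min`. -/
noncomputable def Setting.γmin {Θ : Type*} [MeasurableSpace Θ] (S : Setting Θ) : ℝ :=
  sInf S.γSet

/-- `γ_max`. -/
noncomputable def Setting.γmax {Θ : Type*} [MeasurableSpace Θ] (S : Setting Θ) : ℝ :=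
  sSup S.γSet

namespace Setting

variable {Θ : Type*} [MeasurableSpace Θ] (S : Setting Θ)

lemma h_mono {x y : ℝ} (hx : 0 ≤ x) (hxy : x ≤ y) : S.h x ≤ S.h y :=
  S.h_strictMono.monotoneOn hx (le_trans hx hxy) hxy

lemma slope_lt {x z : ℝ} (hz : 0 < z) (hzx : z < x) : S.h x / x < S.h z / z := by
  have hx0 : (0:ℝ) < x := lt_trans hz hzx
  have hb : (0:ℝ) < z / x := div_pos hz hx0
  have ha : (0:ℝ) < 1 - z / x := by
    have : z / x < 1 := (div_lt_one hx0).2 hzx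
    linarith
  have key := S.h_strictConcave.2 (Set.self_mem_Ici) (Set.mem_Ici.2 hx0.le)
      (by exact fun hc => (ne_of_gt hx0) hc.symm) ha hb (by ring)
  have hzeq : (1 - z / x) * (0:ℝ) + (z / x) * x = z := by field_simp; ring
  simp only [smul_eq_mul] at key
  rw [hzeq, S.h_zero, mul_zero, zero_add] at key
  rw [div_lt_div_iff₀ hx0 hz]
  calc S.h x * z = (z / x * S.h x) * x := by field_simp
    _ < S.h z * x := mul_lt_mul_of_pos_right key hx0

lemma slope_tendsto : Tendsto (fun z => S.h z / z) (𝓝[>] (0:ℝ)) (𝓝 1) := by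
  have := (hasDerivWithinAt_iff_tendsto_slope).1 (S.h_hasDeriv 0 Set.self_mem_Ici)
  rw [S.h'_zero] at this
  have hset : Set.Ici (0:ℝ) \ {0} = Set.Ioi 0 := Set.Ici_sdiff_left
  rw [hset] at this
  refine this.congr (fun z => ?_)
  simp [slope_def_field, S.h_zero]

lemma slope_le_one {x : ℝ} (hx : 0 < x) : S.h x / x ≤ 1 := by
  refine ge_of_tendsto (S.slope_tendsto) ?_
  have h1 : Set.Ioo (0:ℝ) x ∈ 𝓝[>] (0:ℝ) :=
    Ioo_mem_nhdsGT_of_mem (by constructor <;> simp [hx.le, hx])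
  filter_upwards [h1] with z hz
  exact (S.slope_lt hz.1 hz.2).le

lemma h_lt_self {x : ℝ} (hx : 0 < x) : S.h x < x := by
  have h2 : S.h x / x < S.h (x/2) / (x/2) := S.slope_lt (by linarith) (by linarith)
  have h3 : S.h (x/2) / (x/2) ≤ 1 := S.slope_le_one (by linarith)
  exact (div_lt_one hx).1 (lt_of_lt_of_le h2 h3)

lemma cont_hmax : Continuous (fun x : ℝ => S.h (max x 0)) := by
  apply S.h_contOn.comp_continuous (continuous_id.max continuous_const)
  intro x; exact Set.mem_Ici.2 (le_max_right x 0)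

lemma fn_nonneg (t : ℝ) (n : ℕ) (θ : Θ) {x : ℝ} (hx : 0 ≤ x) : 0 ≤ S.fn t n θ x := by
  induction n with
  | zero => exact hx
  | succ n ih => exact S.f_nonneg t _ ih

lemma fn_pos (t : ℝ) (n : ℕ) (θ : Θ) {x : ℝ} (hx : 0 < x) : 0 < S.fn t n θ x := by
  induction n with
  | zero => exact hx
  | succ n ih => exact S.f_pos t _ ih

lemma fn_mono (t : ℝ) (n : ℕ) (θ : Θ) {x y : ℝ} (hx : 0 ≤ x) (hxy : x ≤ y) :
    S.fn t n θ x ≤ S.fn t n θ y := by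
  induction n with
  | zero => exact hxy
  | succ n ih => exact S.f_mono t _ (S.fn_nonneg t n θ hx) ih

lemma fn_succ' (t : ℝ) (n : ℕ) (θ : Θ) (x : ℝ) :
    S.fn t (n + 1) θ x = S.fn t n (S.T θ) (S.f t θ x) := by
  induction n with
  | zero => rfl
  | succ n ih =>
      show S.f t (S.T^[n+1] θ) (S.fn t (n+1) θ x) = _
      rw [ih]
      show _ = S.f t (S.T^[n] (S.T θ)) (S.fn t n (S.T θ) (S.f t θ x))
      rw [← Function.iterate_succ_apply]

lemma iter_T_Tinv (n : ℕ) (θ : Θ) : S.T^[n] (S.Tinv^[n] θ) = θ := by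
  induction n with
  | zero => rfl
  | succ n ih =>
      rw [Function.iterate_succ_apply' (f := S.Tinv), Function.iterate_succ_apply (f := S.T),
        S.right_inv _, ih]

lemma ψ_succ (t M : ℝ) (n : ℕ) (θ : Θ) :
    S.ψ t M (n + 1) θ = S.f t (S.Tinv θ) (S.ψ t M n (S.Tinv θ)) := by
  show S.f t (S.T^[n] (S.Tinv^[n+1] θ)) (S.fn t n (S.Tinv^[n+1] θ) M) = _
  rw [Function.iterate_succ_apply (f := S.Tinv), S.iter_T_Tinv n (S.Tinv θ)]
  rfl

lemma ψ_succ_T (t M : ℝ) (n : ℕ) (θ : Θ) :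
    S.ψ t M (n + 1) (S.T θ) = S.f t θ (S.ψ t M n θ) := by
  rw [S.ψ_succ, S.left_inv θ]

lemma ψ_nonneg (t : ℝ) {M : ℝ} (hM : 0 ≤ M) (n : ℕ) (θ : Θ) : 0 ≤ S.ψ t M n θ :=
  S.fn_nonneg t n _ hM

lemma ψ_pos (t : ℝ) {M : ℝ} (hM : 0 < M) (n : ℕ) (θ : Θ) : 0 < S.ψ t M n θ :=
  S.fn_pos t n _ hM

lemma ψ_succ_le {t M : ℝ} (hM : 0 < M) (hMf : ∀ θ, S.f t θ M < M) (n : ℕ) (θ : Θ) :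
    S.ψ t M (n + 1) θ ≤ S.ψ t M n θ := by
  show S.fn t (n+1) (S.Tinv^[n+1] θ) M ≤ _
  rw [S.fn_succ']
  rw [Function.iterate_succ_apply' (f := S.Tinv), S.right_inv _]
  exact S.fn_mono t n _ (S.f_nonneg t _ hM.le) (hMf _).le

lemma ψ_antitone {t M : ℝ} (hM : 0 < M) (hMf : ∀ θ, S.f t θ M < M) (θ : Θ) :
    Antitone (fun n => S.ψ t M n θ) :=
  antitone_nat_of_succ_le (fun n => S.ψ_succ_le hM hMf n θ)

lemma ψ_le_M {t M : ℝ} (hM : 0 < M) (hMf : ∀ θ, S.f t θ M < M) (n : ℕ) (θ : Θ) :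
    S.ψ t M n θ ≤ M :=
  (S.ψ_antitone hM hMf θ (Nat.zero_le n)).trans (le_of_eq rfl)

lemma ψ_meas (t M : ℝ) (n : ℕ) (hM : 0 ≤ M) : Measurable (S.ψ t M n) := by
  induction n with
  | zero =>
      have : S.ψ t M 0 = fun _ => M := rfl
      rw [this]; exact measurable_const
  | succ n ih =>
      have : (fun θ => S.ψ t M (n+1) θ) =
          fun θ => Real.exp (-t) * S.g (S.Tinv θ) *
            S.h (max (S.ψ t M n (S.Tinv θ)) 0) := by
        funext θ
        rw [S.ψ_succ, max_eq_left (S.ψ_nonneg t hM n _)]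
        rfl
      have m1 : Measurable fun θ => S.ψ t M n (S.Tinv θ) := ih.comp S.Tinv_meas
      have m3 : Measurable fun θ => S.h (max (S.ψ t M n (S.Tinv θ)) 0) :=
        S.cont_hmax.measurable.comp m1
      rw [show S.ψ t M (n+1) = fun θ => S.ψ t M (n+1) θ from rfl, this]
      exact (measurable_const.mul (S.g_meas.comp S.Tinv_meas)).mul m3

lemma φ_nonneg (t : ℝ) {M : ℝ} (hM : 0 ≤ M) (θ : Θ) : 0 ≤ S.φ t M θ :=
  Real.iInf_nonneg (fun n => S.ψ_nonneg t hM (n+1) θ)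

lemma φ_le_ψ (t : ℝ) {M : ℝ} (hM : 0 ≤ M) (n : ℕ) (θ : Θ) :
    S.φ t M θ ≤ S.ψ t M (n + 1) θ :=
  ciInf_le ⟨0, by rintro x ⟨k, rfl⟩; exact S.ψ_nonneg t hM (k+1) θ⟩ n

lemma ψ_tendsto {t M : ℝ} (hM : 0 < M) (hMf : ∀ θ, S.f t θ M < M) (θ : Θ) :
    Tendsto (fun n => S.ψ t M (n + 1) θ) atTop (𝓝 (S.φ t M θ)) := by
  apply tendsto_atTop_ciInf
  · exact fun a b hab => S.ψ_antitone hM hMf θ (by omega)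
  · exact ⟨0, by rintro x ⟨k, rfl⟩; exact S.ψ_nonneg t hM.le (k+1) θ⟩

lemma φ_meas (t : ℝ) {M : ℝ} (hM : 0 < M) (hMf : ∀ θ, S.f t θ M < M) :
    Measurable (S.φ t M) :=
  measurable_of_tendsto_metrizable (fun n => S.ψ_meas t M (n+1) hM.le)
    (tendsto_pi_nhds.2 (fun θ => S.ψ_tendsto hM hMf θ))

lemma φ_T {t M : ℝ} (hM : 0 < M) (hMf : ∀ θ, S.f t θ M < M) (θ : Θ) :
    S.φ t M (S.T θ) = S.f t θ (S.φ t M θ) := by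
  have h1 : Tendsto (fun n => S.ψ t M (n + 1) (S.T θ)) atTop (𝓝 (S.φ t M (S.T θ))) :=
    S.ψ_tendsto hM hMf (S.T θ)
  have h2' : Tendsto (fun n => S.ψ t M n θ) atTop (𝓝 (S.φ t M θ)) :=
    (tendsto_add_atTop_iff_nat 1).1 (S.ψ_tendsto hM hMf θ)
  have h3 : Tendsto (fun n => S.f t θ (S.ψ t M n θ)) atTop (𝓝 (S.f t θ (S.φ t M θ))) := by
    have hc : Continuous (fun x : ℝ => Real.exp (-t) * S.g θ * S.h (max x 0)) :=
      (continuous_const.mul continuous_const).mul S.cont_hmax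
    have htd := (hc.tendsto (S.φ t M θ)).comp h2'
    have e2 : Real.exp (-t) * S.g θ * S.h (max (S.φ t M θ) 0) = S.f t θ (S.φ t M θ) := by
      rw [max_eq_left (S.φ_nonneg t hM.le θ)]; rfl
    rw [e2] at htd
    refine htd.congr (fun n => ?_)
    simp only [Function.comp_apply]
    rw [max_eq_left (S.ψ_nonneg t hM.le n θ)]
    rfl
  have heq : (fun n => S.ψ t M (n + 1) (S.T θ)) = fun n => S.f t θ (S.ψ t M n θ) := by
    funext n; exact S.ψ_succ_T t M n θ
  rw [heq] at h1
  exact tendsto_nhds_unique h1 h3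

lemma φ_le_M {t M : ℝ} (hM : 0 < M) (hMf : ∀ θ, S.f t θ M < M) (θ : Θ) :
    S.φ t M θ ≤ M :=
  (S.φ_le_ψ t hM.le 0 θ).trans (S.ψ_le_M hM hMf 1 θ)

end Setting
lemma integrable_of_bound {Θ : Type*} [MeasurableSpace Θ] (ρ : MeasureTheory.Measure Θ)
    [MeasureTheory.IsFiniteMeasure ρ] (F : Θ → ℝ) (b : ℝ) (hF : Measurable F)
    (hb : ∀ θ, |F θ| ≤ b) : MeasureTheory.Integrable F ρ :=
  (MeasureTheory.integrable_const b).mono' hF.aestronglyMeasurable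
    (Filter.Eventually.of_forall (fun θ => by rw [Real.norm_eq_abs]; exact hb θ))

/-- in the topological setting, assuming additionally `h''(0) < 0`,
`μ(N_{γ_max}) = 1` for every `T`-invariant Borel probability measure `μ`. -/
theorem stmt18 {Θ : Type*} [TopologicalSpace Θ] [CompactSpace Θ] [Nonempty Θ]
    [TopologicalSpace.MetrizableSpace Θ] [MeasurableSpace Θ] [BorelSpace Θ]
    (S : Setting Θ) (hT : Continuous S.T) (hTinv : Continuous S.Tinv)
    (hgc : Continuous S.g)
    (hsecond : ∃ c : ℝ, c < 0 ∧ HasDerivWithinAt S.h' c (Set.Ici 0) 0)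
    (M : ℝ → ℝ) (hM : ∀ t, 0 < M t) (hMf : ∀ t θ, S.f t θ (M t) < M t)
    (μ : Measure Θ) [IsProbabilityMeasure μ] (hμ : MeasurePreserving S.T μ μ) :
    μ (S.Nset S.γmax (M S.γmax)) = 1 := by
  classical
  set t : ℝ := S.γmax with ht
  set Mt : ℝ := M t with hMtdef
  have hMt0 : 0 < Mt := hM t
  have hMtf : ∀ θ, S.f t θ Mt < Mt := fun θ => hMf t θ
  set φf : Θ → ℝ := S.φ t Mt with hφf
  have hφmeas : Measurable φf := S.φ_meas t hMt0 hMtf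
  have hφ0 : ∀ θ, 0 ≤ φf θ := fun θ => S.φ_nonneg t hMt0.le θ
  have φ_T' : ∀ θ, φf (S.T θ) = S.f t θ (φf θ) := fun θ => S.φ_T hMt0 hMtf θ
  have hφleM : ∀ θ, φf θ ≤ Mt := fun θ => S.φ_le_M hMt0 hMtf θ
  set A : Set Θ := {θ | 0 < φf θ} with hA
  have hAmeas : MeasurableSet A := measurableSet_lt measurable_const hφmeas
  have hNA : S.Nset t Mt = Aᶜ := by
    ext θ
    constructor
    · intro h hlt
      have h0 : φf θ = 0 := h
      have hlt' : 0 < φf θ := hlt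
      rw [h0] at hlt'
      exact lt_irrefl 0 hlt'
    · intro h
      show φf θ = 0
      exact le_antisymm (not_lt.1 (fun hc => h hc)) (hφ0 θ)
  rw [hNA, prob_compl_eq_one_iff hAmeas]
  by_contra hA0
  -- bounds on g
  obtain ⟨θ₀, -, hm⟩ := isCompact_univ.exists_isMinOn
    ⟨Classical.arbitrary Θ, Set.mem_univ _⟩ hgc.continuousOn
  set m : ℝ := S.g θ₀ with hmdef
  have hm0 : 0 < m := S.g_pos θ₀
  have hmle : ∀ θ, m ≤ S.g θ := fun θ => hm (Set.mem_univ θ)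
  obtain ⟨C, hC⟩ := S.g_bdd
  -- γSet is nonempty and bounded above
  have hbdd : BddAbove S.γSet := by
    refine ⟨Real.log C, ?_⟩
    rintro x ⟨μ', hμ'p, hμ'inv, rfl⟩
    have hint : Integrable (fun θ => Real.log (S.g θ)) μ' := by
      haveI := hμ'p
      refine integrable_of_bound μ' _ (max |Real.log m| |Real.log C|)
        (Real.measurable_log.comp S.g_meas) (fun θ => ?_)
      exact abs_le_max_abs_abs (Real.log_le_log hm0 (hmle θ))
        (Real.log_le_log (S.g_pos θ) (hC θ))
    haveI := hμ'p
    calc S.γfn μ' = ∫ θ, Real.log (S.g θ) ∂μ' := rfl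
      _ ≤ ∫ _, Real.log C ∂μ' := by
          refine integral_mono hint (integrable_const _) (fun θ => ?_)
          exact Real.log_le_log (S.g_pos θ) (hC θ)
      _ = Real.log C := by simp [integral_const, measure_univ]
  -- the invariant measure ν on A
  have hμA_ne_top : μ A ≠ ⊤ := (measure_lt_top μ A).ne
  set ν : Measure Θ := (μ A)⁻¹ • μ.restrict A with hν
  haveI hνprob : IsProbabilityMeasure ν := by
    constructor
    rw [hν, Measure.smul_apply, Measure.restrict_apply_univ, smul_eq_mul]
    exact ENNReal.inv_mul_cancel hA0 hμA_ne_top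
  have hTpre : S.T ⁻¹' A = A := by
    ext θ
    simp only [Set.mem_preimage, hA, Set.mem_setOf_eq]
    constructor
    · intro hlt
      by_contra hle
      have h0 : φf θ = 0 := le_antisymm (not_lt.1 hle) (hφ0 θ)
      rw [φ_T' θ, h0] at hlt
      have hf0 : S.f t θ 0 = 0 := by
        show Real.exp (-t) * S.g θ * S.h 0 = 0
        rw [S.h_zero, mul_zero]
      rw [hf0] at hlt
      exact lt_irrefl 0 hlt
    · intro hpos
      rw [φ_T' θ]
      exact S.f_pos t θ hpos
  have hνinv : MeasurePreserving S.T ν ν := by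
    refine ⟨S.T_meas, ?_⟩
    rw [hν, Measure.map_smul]
    congr 1
    ext B hB
    rw [Measure.map_apply S.T_meas hB, Measure.restrict_apply hB,
      Measure.restrict_apply (S.T_meas hB)]
    have hBA : S.T ⁻¹' B ∩ A = S.T ⁻¹' (B ∩ A) := by rw [Set.preimage_inter, hTpre]
    rw [hBA, hμ.measure_preimage (hB.inter hAmeas).nullMeasurableSet]
  have haeA : ∀ᵐ θ ∂ν, θ ∈ A := by
    rw [ae_iff]
    have : {θ | ¬ θ ∈ A} = Aᶜ := rfl
    rw [this, hν, Measure.smul_apply, Measure.restrict_apply hAmeas.compl]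
    simp
  -- the functions
  set u : Θ → ℝ := fun θ => Real.log (φf θ) with hu
  set Hq : Θ → ℝ := fun θ => Real.log (S.h (φf θ) / φf θ) with hHq
  set c : Θ → ℝ := fun θ => Real.log (S.g θ) - t with hcdef
  set Cc : ℝ := max |Real.log m - t| |Real.log C - t| with hCcdef
  have hCc0 : 0 ≤ Cc := le_trans (abs_nonneg _) (le_max_left _ _)
  have hcbd : ∀ θ, |c θ| ≤ Cc := fun θ =>
    abs_le_max_abs_abs (sub_le_sub_right (Real.log_le_log hm0 (hmle θ)) t)
      (sub_le_sub_right (Real.log_le_log (S.g_pos θ) (hC θ)) t)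
  set W : Θ → ℝ := fun θ => max (Hq θ) (-1) with hWdef
  set f₁ : Θ → ℝ := fun θ => c θ + W θ with hf₁def
  have hHqle : ∀ θ, Hq θ ≤ 0 := by
    intro θ
    rcases eq_or_lt_of_le (hφ0 θ) with h0 | h0
    · show Real.log (S.h (φf θ) / φf θ) ≤ 0
      rw [← h0, S.h_zero]
      simp
    · exact Real.log_nonpos (div_nonneg (S.h_nonneg (hφ0 θ)) (hφ0 θ))
        ((div_le_one h0).2 (S.h_lt_self h0).le)
  have hHqlt : ∀ θ ∈ A, Hq θ < 0 := fun θ hθ =>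
    Real.log_neg (div_pos (S.h_pos hθ) hθ) ((div_lt_one hθ).2 (S.h_lt_self hθ))
  have hWle : ∀ θ, W θ ≤ 0 := fun θ => max_le (hHqle θ) (by norm_num)
  have hWlt : ∀ θ ∈ A, W θ < 0 := fun θ hθ => max_lt (hHqlt θ hθ) (by norm_num)
  have hWbd : ∀ θ, |W θ| ≤ 1 :=
    fun θ => abs_le.2 ⟨le_max_right (Hq θ) (-1), (hWle θ).trans zero_le_one⟩
  have hf₁le : ∀ θ, f₁ θ ≤ Cc := fun θ => by
    have := hcbd θ
    have := hWle θ
    have h1 : c θ ≤ Cc := le_trans (le_abs_self _) (hcbd θ)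
    show c θ + W θ ≤ Cc
    linarith
  have hf₁bd : ∀ θ, |f₁ θ| ≤ Cc + 1 := fun θ => by
    have h1 := hcbd θ
    have h2 := hWbd θ
    calc |f₁ θ| = |c θ + W θ| := rfl
      _ ≤ |c θ| + |W θ| := abs_add_le _ _
      _ ≤ Cc + 1 := add_le_add h1 h2
  set U : ℝ := max (Real.log Mt) 0 with hUdef
  have huU : ∀ θ, u θ ≤ U := by
    intro θ
    rcases eq_or_lt_of_le (hφ0 θ) with h0 | h0
    · show Real.log (φf θ) ≤ U
      rw [← h0]
      simp [hUdef]
    · exact le_trans (Real.log_le_log h0 (hφleM θ)) (le_max_left _ _)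
  -- the key cocycle identity on A
  have hkey : ∀ θ ∈ A, u (S.T θ) = u θ + (c θ + Hq θ) := by
    intro θ hθ
    have hφpos : 0 < φf θ := hθ
    have hφne : φf θ ≠ 0 := ne_of_gt hφpos
    have e1 : φf (S.T θ) = (Real.exp (-t) * S.g θ) * ((S.h (φf θ) / φf θ) * φf θ) := by
      rw [φ_T' θ]
      show Real.exp (-t) * S.g θ * S.h (φf θ) = _
      rw [div_mul_cancel₀ _ hφne]
    have hgne : S.g θ ≠ 0 := ne_of_gt (S.g_pos θ)
    have hexpne : Real.exp (-t) ≠ 0 := Real.exp_ne_zero _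
    have hqne : S.h (φf θ) / φf θ ≠ 0 := ne_of_gt (div_pos (S.h_pos hφpos) hφpos)
    show Real.log (φf (S.T θ)) = _
    rw [e1, Real.log_mul (mul_ne_zero hexpne hgne) (mul_ne_zero hqne hφne),
      Real.log_mul hexpne hgne, Real.log_mul hqne hφne, Real.log_exp]
    show -t + Real.log (S.g θ) + (Hq θ + u θ) = u θ + (c θ + Hq θ)
    show -t + Real.log (S.g θ) + (Hq θ + u θ) = u θ + (Real.log (S.g θ) - t + Hq θ)
    ring
  -- measurability
  have hmeas_u : Measurable u := Real.measurable_log.comp hφmeas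
  have hmeas_Hq : Measurable Hq := by
    have mh : Measurable fun θ => S.h (φf θ) := by
      have e : (fun θ => S.h (φf θ)) = fun θ => S.h (max (φf θ) 0) :=
        funext fun θ => by rw [max_eq_left (hφ0 θ)]
      rw [e]
      exact S.cont_hmax.measurable.comp hφmeas
    exact Real.measurable_log.comp (mh.div hφmeas)
  have hmeas_c : Measurable c := (Real.measurable_log.comp S.g_meas).sub measurable_const
  have hmeas_W : Measurable W := hmeas_Hq.max measurable_const
  have hmeas_f₁ : Measurable f₁ := hmeas_c.add hmeas_W
  -- the truncated functions
  set v : ℕ → Θ → ℝ := fun K θ => max (u θ) (-(K:ℝ)) with hvdef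
  set G : ℕ → Θ → ℝ := fun K θ => if -(K:ℝ) ≤ u θ then max (f₁ θ) (-(K:ℝ) - u θ) else Cc
    with hGdef
  have hGmeas : ∀ K : ℕ, Measurable (G K) := fun K =>
    Measurable.ite (measurableSet_le measurable_const hmeas_u)
      (hmeas_f₁.max (measurable_const.sub hmeas_u)) measurable_const
  have hGbd : ∀ (K : ℕ) θ, |G K θ| ≤ Cc + 1 := by
    intro K θ
    show |if -(K:ℝ) ≤ u θ then max (f₁ θ) (-(K:ℝ) - u θ) else Cc| ≤ Cc + 1
    split_ifs with hcase
    · apply abs_le.2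
      constructor
      · exact le_trans (abs_le.1 (hf₁bd θ)).1 (le_max_left _ _)
      · exact max_le ((hf₁le θ).trans (by linarith)) (by linarith)
    · rw [abs_of_nonneg hCc0]; linarith
  have hGint : ∀ K : ℕ, Integrable (G K) ν :=
    fun K => integrable_of_bound ν _ (Cc + 1) (hGmeas K) (hGbd K)
  -- the measurable equivalence given by T
  let e : Θ ≃ᵐ Θ :=
    ⟨⟨S.T, S.Tinv, S.left_inv, S.right_inv⟩, S.T_meas, S.Tinv_meas⟩
  -- 0 ≤ ∫ G K for every K
  have hint0 : ∀ K : ℕ, 0 ≤ ∫ θ, G K θ ∂ν := by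
    intro K
    have hvmeas : Measurable (v K) := hmeas_u.max measurable_const
    have hvK_bd : ∀ θ, |v K θ| ≤ max U 0 + K := by
      intro θ
      apply abs_le.2
      constructor
      · have h1 : -(max U 0 + (K:ℝ)) ≤ -(K:ℝ) := by
          have : (0:ℝ) ≤ max U 0 := le_max_right _ _
          linarith
        exact le_trans h1 (le_max_right _ _)
      · apply max_le
        · have : u θ ≤ max U 0 := le_trans (huU θ) (le_max_left _ _)
          have hK : (0:ℝ) ≤ K := Nat.cast_nonneg K
          linarith
        · have : (0:ℝ) ≤ max U 0 := le_max_right _ _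
          linarith
    have hv_int : Integrable (v K) ν := integrable_of_bound ν _ _ hvmeas hvK_bd
    have hcomp_int : Integrable (fun θ => v K (S.T θ)) ν :=
      integrable_of_bound ν _ _ (hvmeas.comp S.T_meas) (fun θ => hvK_bd (S.T θ))
    have hint_eq : ∫ θ, v K (S.T θ) ∂ν = ∫ θ, v K θ ∂ν :=
      hνinv.integral_comp e.measurableEmbedding (v K)
    have hptwise : ∀ᵐ θ ∂ν, v K (S.T θ) - v K θ ≤ G K θ := by
      filter_upwards [haeA] with θ hθ
      have hid := hkey θ hθ
      have hfle : c θ + Hq θ ≤ f₁ θ := by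
        show c θ + Hq θ ≤ c θ + W θ
        exact add_le_add le_rfl (le_max_left _ _)
      have hfCc : c θ + Hq θ ≤ Cc := by
        have h1 : c θ ≤ Cc := le_trans (le_abs_self _) (hcbd θ)
        have h2 := hHqle θ
        linarith
      show v K (S.T θ) - v K θ ≤ G K θ
      by_cases hcase : -(K:ℝ) ≤ u θ
      · have hG : G K θ = max (f₁ θ) (-(K:ℝ) - u θ) := if_pos hcase
        have hv1 : v K θ = u θ := max_eq_left hcase
        have hv2 : v K (S.T θ) ≤ u θ + max (f₁ θ) (-(K:ℝ) - u θ) := by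
          apply max_le
          · rw [hid]
            have : c θ + Hq θ ≤ max (f₁ θ) (-(K:ℝ) - u θ) :=
              le_trans hfle (le_max_left _ _)
            linarith
          · have : -(K:ℝ) - u θ ≤ max (f₁ θ) (-(K:ℝ) - u θ) := le_max_right _ _
            linarith
        rw [hG, hv1]
        linarith
      · have hG : G K θ = Cc := if_neg hcase
        push_neg at hcase
        have hv1 : v K θ = -(K:ℝ) := max_eq_right hcase.le
        have hv2 : v K (S.T θ) ≤ -(K:ℝ) + Cc := by
          apply max_le
          · rw [hid]; linarith
          · linarith
        rw [hG, hv1]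
        linarith
    have hle : ∫ θ, (v K (S.T θ) - v K θ) ∂ν ≤ ∫ θ, G K θ ∂ν :=
      integral_mono_ae (hcomp_int.sub hv_int) (hGint K) hptwise
    rwa [integral_sub hcomp_int hv_int, hint_eq, sub_self] at hle
  -- G K is antitone in K
  have hGanti : ∀ θ, Antitone (fun K : ℕ => G K θ) := by
    intro θ
    apply antitone_nat_of_succ_le
    intro K
    show G (K+1) θ ≤ G K θ
    have hcast : -((K+1:ℕ):ℝ) = -(K:ℝ) - 1 := by push_cast; ring
    by_cases h1 : -(K:ℝ) ≤ u θ
    · have h2 : -((K+1:ℕ):ℝ) ≤ u θ := by rw [hcast]; linarith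
      show (if -((K+1:ℕ):ℝ) ≤ u θ then max (f₁ θ) (-((K+1:ℕ):ℝ) - u θ) else Cc)
          ≤ (if -(K:ℝ) ≤ u θ then max (f₁ θ) (-(K:ℝ) - u θ) else Cc)
      rw [if_pos h1, if_pos h2]
      exact max_le_max (le_refl _) (by rw [hcast]; linarith)
    · show (if -((K+1:ℕ):ℝ) ≤ u θ then max (f₁ θ) (-((K+1:ℕ):ℝ) - u θ) else Cc)
          ≤ (if -(K:ℝ) ≤ u θ then max (f₁ θ) (-(K:ℝ) - u θ) else Cc)
      rw [if_neg h1]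
      by_cases h2 : -((K+1:ℕ):ℝ) ≤ u θ
      · rw [if_pos h2]
        push_neg at h1
        apply max_le (hf₁le θ)
        rw [hcast]
        rw [hcast] at h2
        linarith
      · rw [if_neg h2]
  -- pointwise convergence of G K to f₁ on A
  have hGtend : ∀ θ ∈ A, Tendsto (fun K : ℕ => G K θ) atTop (𝓝 (f₁ θ)) := by
    intro θ hθ
    have hev : ∀ᶠ K : ℕ in atTop, G K θ = f₁ θ := by
      obtain ⟨K₀, hK₀⟩ := exists_nat_ge (max (-(u θ)) (-(f₁ θ) - u θ))
      refine eventually_atTop.2 ⟨K₀, fun K hK => ?_⟩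
      have hK' : max (-(u θ)) (-(f₁ θ) - u θ) ≤ (K:ℝ) :=
        le_trans hK₀ (by exact_mod_cast hK)
      have h1 : -(K:ℝ) ≤ u θ := by
        have := le_trans (le_max_left (-(u θ)) (-(f₁ θ) - u θ)) hK'
        linarith
      have h2 : -(K:ℝ) - u θ ≤ f₁ θ := by
        have := le_trans (le_max_right (-(u θ)) (-(f₁ θ) - u θ)) hK'
        linarith
      show (if -(K:ℝ) ≤ u θ then max (f₁ θ) (-(K:ℝ) - u θ) else Cc) = f₁ θ
      rw [if_pos h1, max_eq_left h2]
    exact Tendsto.congr' (by filter_upwards [hev] with K hK; exact hK.symm)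
      tendsto_const_nhds
  -- pass to the limit
  have hf₁int : Integrable f₁ ν := integrable_of_bound ν _ (Cc+1) hmeas_f₁ hf₁bd
  have htendInt : Tendsto (fun K => ∫ θ, G K θ ∂ν) atTop (𝓝 (∫ θ, f₁ θ ∂ν)) :=
    integral_tendsto_of_tendsto_of_antitone hGint hf₁int (ae_of_all _ hGanti)
      (by filter_upwards [haeA] with θ hθ; exact hGtend θ hθ)
  have hf₁nonneg : 0 ≤ ∫ θ, f₁ θ ∂ν := ge_of_tendsto' htendInt hint0
  -- split the integral
  have hlogg_int : Integrable (fun θ => Real.log (S.g θ)) ν := by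
    refine integrable_of_bound ν _ (max |Real.log m| |Real.log C|)
      (Real.measurable_log.comp S.g_meas) (fun θ => ?_)
    exact abs_le_max_abs_abs (Real.log_le_log hm0 (hmle θ))
      (Real.log_le_log (S.g_pos θ) (hC θ))
  have hcint : Integrable c ν := integrable_of_bound ν _ Cc hmeas_c hcbd
  have hWint : Integrable W ν := integrable_of_bound ν _ 1 hmeas_W hWbd
  have hsplit : ∫ θ, f₁ θ ∂ν = (∫ θ, c θ ∂ν) + ∫ θ, W θ ∂ν := integral_add hcint hWint
  have hcint_eq : ∫ θ, c θ ∂ν = S.γfn ν - t := by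
    show ∫ θ, (Real.log (S.g θ) - t) ∂ν = S.γfn ν - t
    rw [integral_sub hlogg_int (integrable_const t), integral_const]
    simp [Setting.γfn]
  have hγν : S.γfn ν ≤ t := le_csSup hbdd ⟨ν, hνprob, hνinv, rfl⟩
  have hWnonneg : 0 ≤ ∫ θ, W θ ∂ν := by
    rw [hsplit, hcint_eq] at hf₁nonneg
    linarith
  have hWint0 : ∫ θ, W θ ∂ν = 0 := le_antisymm (integral_nonpos hWle) hWnonneg
  have hWzero : (fun θ => -W θ) =ᵐ[ν] 0 := by
    refine (integral_eq_zero_iff_of_nonneg (fun θ => neg_nonneg.2 (hWle θ)) hWint.neg).1 ?_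
    rw [integral_neg, hWint0, neg_zero]
  haveI : NeBot (ae ν) := ae_neBot.2 (IsProbabilityMeasure.ne_zero ν)
  obtain ⟨θ, hθ1, hθ2⟩ := (hWzero.and haeA).exists
  have hlt := hWlt θ hθ2
  have : -W θ = 0 := hθ1
  linarith [neg_pos.2 hlt, this.ge, this.le]
end
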